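/- The finite height property is transitive: if K ≤ H ≤ G, K has height at most m in H, and H has height at most n in G, then K has finite height in G (bounded by a function of m and n), provided every finite-intersection condition is interpreted via essential distinctness of cosets. -/

import Mathlib

open Pointwise

/-- Transitivity of finite height: if `K ≤ H ≤ G`, `K` has height at most `m` in `H`
(intersections of `m` conjugates of `K` by elements of `H` representing `m` pairwise
distinct cosets of `K` are finite) and `H` has height at most `n` in `G`, then `K`
has finite height in `G`, with a bound depending only on `m` and `n`. -/
theorem stmt4 :
    ∀ m n : ℕ, ∃ N : ℕ, ∀ (G : Type) [Group G] (K H : Subgroup G), K ≤ H →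
      (∀ f : Fin m → G, (∀ i, f i ∈ H) →
        (∀ i j : Fin m, i ≠ j → f i • (K : Set G) ≠ f j • (K : Set G)) →
        (⋂ i, (fun x => f i * x * (f i)⁻¹) '' (K : Set G)).Finite) →
      (∀ f : Fin n → G,
        (∀ i j : Fin n, i ≠ j → f i • (H : Set G) ≠ f j • (H : Set G)) →
        (⋂ i, (fun x => f i * x * (f i)⁻¹) '' (H : Set G)).Finite) →
      ∀ f : Fin N → G,
        (∀ i j : Fin N, i ≠ j → f i • (K : Set G) ≠ f j • (K : Set G)) →
        (⋂ i, (fun x => f i * x * (f i)⁻¹) '' (K : Set G)).Finite := by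
  intro m n
  refine ⟨m * n, ?_⟩
  intro G _ K H hKH h1 h2 f hf
  classical
  rcases Nat.eq_zero_or_pos m with hm | hm
  · subst hm
    have huniv := h1 Fin.elim0 (fun i => i.elim0) (fun i => i.elim0)
    rw [Set.iInter_of_empty] at huniv
    exact huniv.subset (Set.subset_univ _)
  rcases Nat.eq_zero_or_pos n with hn | hn
  · subst hn
    have huniv := h2 Fin.elim0 (fun i => i.elim0)
    rw [Set.iInter_of_empty] at huniv
    exact huniv.subset (Set.subset_univ _)
  set g : Fin (m * n) → G ⧸ H := fun i => (f i : G ⧸ H) with hg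
  set T : Finset (G ⧸ H) := Finset.univ.image g with hTdef
  by_cases hT : n ≤ T.card
  · -- many distinct H-cosets: use h2
    obtain ⟨T', hT'sub, hT'card⟩ := Finset.exists_subset_card_eq hT
    set eT := (T'.equivFinOfCardEq hT'card).symm with heT
    have hrep : ∀ i : Fin n, ∃ j, g j = (eT i : G ⧸ H) := by
      intro i
      have hmem : (eT i : G ⧸ H) ∈ T := hT'sub (eT i).2
      rcases Finset.mem_image.mp hmem with ⟨j, _, hj⟩
      exact ⟨j, hj⟩
    choose rep hrepspec using hrep
    have hfin := h2 (fun i => f (rep i)) ?_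
    · refine hfin.subset ?_
      refine Set.iInter_mono' (fun i => ⟨rep i, ?_⟩)
      exact Set.image_mono hKH
    · intro i j hij hEq
      apply hij
      have h1' : (f (rep i))⁻¹ * f (rep j) ∈ H := (leftCoset_eq_iff H).mp hEq
      have h2' : g (rep i) = g (rep j) := QuotientGroup.eq.mpr h1'
      rw [hrepspec i, hrepspec j] at h2'
      have := Subtype.ext h2'
      exact eT.injective this
  · -- pigeonhole: some H-coset contains m of the f i; use h1
    push_neg at hT
    have hcard : T.card * (m - 1) < (Finset.univ : Finset (Fin (m * n))).card := by
      rw [Finset.card_univ, Fintype.card_fin]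
      calc T.card * (m - 1) ≤ (n - 1) * (m - 1) :=
            Nat.mul_le_mul_right _ (Nat.le_sub_one_of_lt hT)
        _ < m * n := by
            rcases Nat.exists_eq_add_of_le hm with ⟨m', rfl⟩
            rcases Nat.exists_eq_add_of_le hn with ⟨n', rfl⟩
            simp only [Nat.add_sub_cancel_left]
            ring_nf
            omega
    obtain ⟨y, _, hy⟩ := Finset.exists_lt_card_fiber_of_mul_lt_card_of_maps_to
      (fun a _ => Finset.mem_image_of_mem g (Finset.mem_univ a)) hcard
    have hy' : m ≤ (Finset.univ.filter fun x => g x = y).card := by omega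
    obtain ⟨S, hSsub, hScard⟩ := Finset.exists_subset_card_eq hy'
    set e := S.orderEmbOfFin hScard with he
    have hey : ∀ i : Fin m, g (e i) = y := by
      intro i
      have := hSsub (S.orderEmbOfFin_mem hScard i)
      exact (Finset.mem_filter.mp this).2
    set i0 : Fin m := ⟨0, hm⟩ with hi0
    set a : G := f (e i0) with ha
    have hmemH : ∀ i : Fin m, a⁻¹ * f (e i) ∈ H := by
      intro i
      have : g (e i0) = g (e i) := by rw [hey, hey]
      exact QuotientGroup.eq.mp this
    have hfin := h1 (fun i => a⁻¹ * f (e i)) hmemH ?_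
    swap
    · intro i j hij hEq
      have : f (e i) • (K : Set G) = f (e j) • (K : Set G) := by
        have h3 : a⁻¹ • (f (e i) • (K : Set G)) = a⁻¹ • (f (e j) • (K : Set G)) := by
          simpa [mul_smul] using hEq
        exact smul_left_cancel a⁻¹ h3
      exact hf (e i) (e j) (fun h => hij (e.injective h)) this
    -- transport finiteness back through conjugation by a
    have hsub : (fun x => a⁻¹ * x * a) '' (⋂ i, (fun x => f i * x * (f i)⁻¹) '' (K : Set G))
        ⊆ ⋂ i : Fin m, (fun x => (a⁻¹ * f (e i)) * x * (a⁻¹ * f (e i))⁻¹) '' (K : Set G) := by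
      rintro x ⟨w, hw, rfl⟩
      refine Set.mem_iInter.mpr fun i => ?_
      have hwi := Set.mem_iInter.mp hw (e i)
      rcases hwi with ⟨k, hk, rfl⟩
      exact ⟨k, hk, by group⟩
    have hinj : Function.Injective fun x : G => a⁻¹ * x * a := by
      intro x y hxy
      simpa using mul_left_cancel (mul_right_cancel hxy)
    exact Set.Finite.of_finite_image (hfin.subset hsub) hinj.injOn
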